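/- Let n ≥ 1 and let b = (b_k)_{k=0}^n be an admissible first order branching pattern, i.e. b arises as the branching pattern (b_k(A))_{k=0}^n of some nonempty A ⊆ 𝕃₀⁽ⁿ⁾. With a_k := 1 + ∑_{j=k+1}^n b_j, the number of subsets A ⊆ 𝕃₀⁽ⁿ⁾ whose branching pattern equals b is ∏_{k=1}^n C(a_k, b_k)·2^{a_k − b_k}, where C(a,b) denotes the binomial coefficient. -/

import Mathlib

open Filter
open scoped Classical

noncomputable section

namespace PWC

/-- Leaves of the binary tree `𝕋⁽ⁿ⁾` of depth `n`: binary words of length `n`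
(coordinate `0` is the first step away from the root). -/
abbrev Leaf (n : ℕ) := Fin n → Bool

/-- The age (distance from the leaves) of the youngest common ancestor `u ∧ v` of two
leaves: `n` minus the length of their longest common prefix. -/
def meetAge {n : ℕ} (u v : Leaf n) : ℕ :=
  if u = v then 0 else n - sInf {i : ℕ | ∃ h : i < n, u ⟨i, h⟩ ≠ v ⟨i, h⟩}

/-- Canonical representative (as a leaf) of the ancestor of `u` at age `k`:
keep the first `n - k` coordinates and pad by `false`. -/
def trunc {n : ℕ} (k : ℕ) (u : Leaf n) : Leaf n :=
  fun i => if (i : ℕ) < n - k then u i else false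

/-- The branching points `ℬ(A) ∩ 𝕃_k` of `A` of age `k`, encoded by the canonical
representatives of the corresponding ancestors. -/
def branchPts {n : ℕ} (A : Finset (Leaf n)) (k : ℕ) : Finset (Leaf n) :=
  ((A ×ˢ A).filter (fun p => meetAge p.1 p.2 = k)).image (fun p => trunc k p.1)

/-- `b_k(A)`: the number of branching points of `A` of age `k`. -/
def bcount {n : ℕ} (A : Finset (Leaf n)) (k : ℕ) : ℕ := (branchPts A k).card

/-- `b_{k,ℓ}(A)`: the number of branching points of `A` of age `ℓ` whose direct
branching ancestor has age `k`; for `k = n+1` the indicator that the oldest branching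
point of `A` has age `ℓ` (i.e. the branching points at age `ℓ` having no strictly older
branching ancestor). -/
def b2count {n : ℕ} (A : Finset (Leaf n)) (k l : ℕ) : ℕ :=
  if k = n + 1 then
    ((branchPts A l).filter (fun w => ∀ j, l < j → j ≤ n → trunc j w ∉ branchPts A j)).card
  else
    ((branchPts A l).filter (fun w => trunc k w ∈ branchPts A k ∧
      ∀ j, l < j → j < k → trunc j w ∉ branchPts A j)).card

/-- `A ≺ B` : `A` is more clustered than `B`. -/
def MoreClustered {n : ℕ} (A B : Finset (Leaf n)) : Prop :=
  ∃ σ : Leaf n → Leaf n, Set.BijOn σ ↑A ↑B ∧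
    ∀ u ∈ A, ∀ v ∈ A, meetAge u v ≤ meetAge (σ u) (σ v)

/-- `A ∼ B` : the subtrees of `𝕋⁽ⁿ⁾` generated by `A` and `B` are graph-isomorphic,
i.e. there is a bijection of the leaf sets preserving all meet ages. -/
def EquivClustered {n : ℕ} (A B : Finset (Leaf n)) : Prop :=
  ∃ σ : Leaf n → Leaf n, Set.BijOn σ ↑A ↑B ∧
    ∀ u ∈ A, ∀ v ∈ A, meetAge (σ u) (σ v) = meetAge u v

/-- A clustering function: vanishes on `∅` and is invariant under isomorphism of the
generated subtrees. -/
def IsClusteringFn {n : ℕ} (Φ : Finset (Leaf n) → ℝ) : Prop :=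
  Φ ∅ = 0 ∧ ∀ A B : Finset (Leaf n), EquivClustered A B → Φ A = Φ B

/-- A monotone clustering function. -/
def IsMonotoneClusteringFn {n : ℕ} (Φ : Finset (Leaf n) → ℝ) : Prop :=
  IsClusteringFn Φ ∧
    (∀ A B : Finset (Leaf n), MoreClustered A B → Φ A ≤ Φ B) ∧
    (∀ A B : Finset (Leaf n), Disjoint A B → Φ (A ∪ B) ≤ Φ A + Φ B)

/-- The partition function `Z_n^{Φ,J}`. -/
def Z (n : ℕ) (Φ : Finset (Leaf n) → ℝ) (J : ℝ) : ℝ :=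
  ∑ A : Finset (Leaf n), Real.exp (J * (A.card : ℝ) - Φ A)

/-- The finite-volume free energy `ζ_n^Φ(J) = 2⁻ⁿ ln Z_n^{Φ,J}`. -/
def zetaN (n : ℕ) (Φ : Finset (Leaf n) → ℝ) (J : ℝ) : ℝ :=
  Real.log (Z n Φ J) / 2 ^ n

/-- The canonical partition function `W_n^Φ(a₀)`. -/
def W (n : ℕ) (Φ : Finset (Leaf n) → ℝ) (a₀ : ℕ) : ℝ :=
  ∑ A ∈ Finset.univ.filter (fun A : Finset (Leaf n) => A.card = a₀), Real.exp (-Φ A)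

/-- The finite-volume canonical free energy `ω_n^Φ(ε) = 2⁻ⁿ ln W_n^Φ(ε 2ⁿ)` (for a
dyadic `ε ∈ [0,1]` and `n` large, `⌊ε 2ⁿ⌋ = ε 2ⁿ`). -/
def omegaN (n : ℕ) (Φ : Finset (Leaf n) → ℝ) (ε : ℝ) : ℝ :=
  Real.log (W n Φ ⌊ε * 2 ^ n⌋₊) / 2 ^ n

/-- The expected density `ρ_n^Φ(J)` of the dry set under the PWC measure. -/
def rhoN (n : ℕ) (Φ : Finset (Leaf n) → ℝ) (J : ℝ) : ℝ :=
  (∑ A : Finset (Leaf n), (A.card : ℝ) * Real.exp (J * (A.card : ℝ) - Φ A)) /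
    (2 ^ n * Z n Φ J)

/-- A dyadic rational. -/
def IsDyadic (x : ℝ) : Prop := ∃ (k : ℤ) (m : ℕ), x = (k : ℝ) / 2 ^ m

/-- The hypotheses of the general theory (Proposition 1.2): each `Φ_n` (for `n ≥ 1`) is
a monotone, non-negative clustering function, and `Φ_n(A) ≤ Φ_{n-1}(A) + γ_n` for any
`A` contained in the leaf set of one of the two subtrees of `𝕋⁽ⁿ⁾` rooted at a child of
the root (identified with `𝕋⁽ⁿ⁻¹⁾` by prepending the corresponding letter), where
`γ_n ≥ 0` and `∑ γ_n 2⁻ⁿ < ∞`. -/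
structure GoodSeq (Φ : ∀ n, Finset (Fin n → Bool) → ℝ) (γ : ℕ → ℝ) : Prop where
  mono : ∀ n, 1 ≤ n → IsMonotoneClusteringFn (Φ n)
  nonneg : ∀ n, 1 ≤ n → ∀ A, 0 ≤ Φ n A
  gamma_nonneg : ∀ n, 0 ≤ γ n
  gamma_summable : Summable fun n => γ n / 2 ^ n
  subtree : ∀ (n : ℕ) (b : Bool) (A : Finset (Fin n → Bool)),
    Φ (n + 1) (A.image fun u => Fin.cons b u) ≤ Φ n A + γ (n + 1)

/-- The first order branching clustering function with parameters `(h_k)_{k=0}^n`, `h`. -/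
def foPhi (n : ℕ) (hs : ℕ → ℝ) (h : ℝ) (A : Finset (Leaf n)) : ℝ :=
  if A = ∅ then 0 else (∑ k ∈ Finset.range (n + 1), hs k * (bcount A k : ℝ)) + h

/-- The second order branching clustering function with parameters
`(h_{k,ℓ})_{0 ≤ ℓ < k ≤ n+1}`, `h`. -/
def soPhi (n : ℕ) (H : ℕ → ℕ → ℝ) (h : ℝ) (A : Finset (Leaf n)) : ℝ :=
  if A = ∅ then 0
  else (∑ k ∈ Finset.range (n + 2), ∑ l ∈ Finset.range k, H k l * (b2count A k l : ℝ)) + h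

/-- A non-decreasing (infinite) triangular array. -/
def ArrayMono (H : ℕ → ℕ → ℝ) : Prop :=
  ∀ k k' l l' : ℕ, l < k → l' < k' → k ≤ k' → l ≤ l' → H k l ≤ H k' l'

/-- The Dirichlet energy on `𝕋⁽ⁿ⁾` of `f` (vertices encoded as words of length `≤ n`,
read from the root; a vertex of length `m` has age `n - m` and its parent edge has
conductance `C (n - m)`). -/
def energy (n : ℕ) (C : ℕ → ℝ) (f : List Bool → ℝ) : ℝ :=
  ∑ m ∈ Finset.Icc 1 n, ∑ v : Fin m → Bool,
    C (n - m) * (f (List.ofFn v) - f (List.ofFn v).dropLast) ^ 2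

/-- The capacity of a set of leaves `A ⊆ 𝕃₀⁽ⁿ⁾`. -/
def cap (n : ℕ) (C : ℕ → ℝ) (A : Finset (Leaf n)) : ℝ :=
  sInf {x : ℝ | ∃ f : List Bool → ℝ, f [] = 1 ∧ (∀ u ∈ A, f (List.ofFn u) = 0) ∧
    x = energy n C f}



section Stmt5Aux

variable {n : ℕ}

private lemma diffset_nonempty {u v : Leaf n} (h : u ≠ v) :
    {i : ℕ | ∃ h : i < n, u ⟨i, h⟩ ≠ v ⟨i, h⟩}.Nonempty := by
  obtain ⟨i, hi⟩ := Function.ne_iff.mp h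
  exact ⟨i.1, i.isLt, by simpa using hi⟩

private lemma meetAge_self (u : Leaf n) : meetAge u u = 0 := by simp [meetAge]

private lemma meetAge_pos {u v : Leaf n} (h : u ≠ v) : 0 < meetAge u v := by
  obtain ⟨hlt, -⟩ := Nat.sInf_mem (diffset_nonempty h)
  simp only [meetAge, if_neg h]
  omega

private lemma meetAge_eq_zero_iff {u v : Leaf n} : meetAge u v = 0 ↔ u = v := by
  constructor
  · intro h
    by_contra hne
    have := meetAge_pos hne
    omega
  · rintro rfl; exact meetAge_self u

private lemma meetAge_init_eq {m : ℕ} {u v : Leaf (m+1)} (hne : u ≠ v)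
    (h : Fin.init u = Fin.init v) : meetAge u v = 1 := by
  have hm : m ∈ {i : ℕ | ∃ h : i < m+1, u ⟨i, h⟩ ≠ v ⟨i, h⟩} := by
    refine ⟨Nat.lt_succ_self m, ?_⟩
    intro heq
    apply hne
    funext i
    induction i using Fin.lastCases with
    | last => exact heq
    | cast i => exact congrFun h i
  have hlb : ∀ j ∈ {i : ℕ | ∃ h : i < m+1, u ⟨i, h⟩ ≠ v ⟨i, h⟩}, m ≤ j := by
    rintro j ⟨hj, hne'⟩
    by_contra hjm
    push_neg at hjm
    apply hne'
    have := congrFun h ⟨j, hjm⟩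
    simpa [Fin.init, Fin.castSucc, Fin.castAdd, Fin.castLE] using this
  have : sInf {i : ℕ | ∃ h : i < m+1, u ⟨i, h⟩ ≠ v ⟨i, h⟩} = m :=
    le_antisymm (Nat.sInf_le hm) (le_csInf ⟨m, hm⟩ hlb)
  rw [meetAge, if_neg hne, this]
  omega

private lemma meetAge_init_ne {m : ℕ} {u v : Leaf (m+1)}
    (h : Fin.init u ≠ Fin.init v) :
    meetAge u v = meetAge (Fin.init u) (Fin.init v) + 1 := by
  have hne : u ≠ v := fun e => h (by rw [e])
  obtain ⟨hi0lt, hi0ne⟩ := Nat.sInf_mem (diffset_nonempty h)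
  set i0 := sInf {i : ℕ | ∃ h : i < m, Fin.init u ⟨i, h⟩ ≠ Fin.init v ⟨i, h⟩} with hi0
  have hmem : i0 ∈ {i : ℕ | ∃ h : i < m+1, u ⟨i, h⟩ ≠ v ⟨i, h⟩} := by
    refine ⟨by omega, ?_⟩
    intro heq
    apply hi0ne
    exact heq
  have hlb : ∀ j ∈ {i : ℕ | ∃ h : i < m+1, u ⟨i, h⟩ ≠ v ⟨i, h⟩}, i0 ≤ j := by
    rintro j ⟨hj, hne'⟩
    by_contra hji
    push_neg at hji
    have hjm : j < m := by omega
    have : j ∈ {i : ℕ | ∃ h : i < m, Fin.init u ⟨i, h⟩ ≠ Fin.init v ⟨i, h⟩} := by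
      refine ⟨hjm, ?_⟩
      intro heq
      apply hne'
      simpa [Fin.init, Fin.castSucc, Fin.castAdd, Fin.castLE] using heq
    have := Nat.sInf_le this
    omega
  have hS : sInf {i : ℕ | ∃ h : i < m+1, u ⟨i, h⟩ ≠ v ⟨i, h⟩} = i0 :=
    le_antisymm (Nat.sInf_le hmem) (le_csInf ⟨i0, hmem⟩ hlb)
  simp only [meetAge, if_neg hne, if_neg h, hS, ← hi0]
  omega

private lemma meetAge_one_iff {m : ℕ} {u v : Leaf (m+1)} :
    meetAge u v = 1 ↔ u ≠ v ∧ Fin.init u = Fin.init v := by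
  constructor
  · intro h1
    have hne : u ≠ v := by
      intro e; rw [e, meetAge_self] at h1; omega
    refine ⟨hne, ?_⟩
    by_contra hinit
    rw [meetAge_init_ne hinit] at h1
    have := meetAge_pos hinit
    omega
  · rintro ⟨hne, hinit⟩
    exact meetAge_init_eq hne hinit

private lemma meetAge_succ_iff {m k : ℕ} (hk : 1 ≤ k) {u v : Leaf (m+1)} :
    meetAge u v = k + 1 ↔
      Fin.init u ≠ Fin.init v ∧ meetAge (Fin.init u) (Fin.init v) = k := by
  constructor
  · intro h
    have hne : u ≠ v := by
      intro e; rw [e, meetAge_self] at h; omega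
    have hinit : Fin.init u ≠ Fin.init v := by
      intro e
      rw [meetAge_init_eq hne e] at h
      omega
    refine ⟨hinit, ?_⟩
    rw [meetAge_init_ne hinit] at h
    omega
  · rintro ⟨hinit, hm⟩
    rw [meetAge_init_ne hinit, hm]

private lemma trunc_zero (u : Leaf n) : trunc 0 u = u := by
  funext i
  simp [trunc, i.isLt]

private lemma trunc_succ {m k : ℕ} (u : Leaf (m+1)) :
    trunc (k+1) u = Fin.snoc (trunc k (Fin.init u)) false := by
  funext i
  induction i using Fin.lastCases with
  | last =>
    have : ¬ ((Fin.last m : ℕ) < (m+1) - (k+1)) := by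
      simp only [Fin.val_last]; omega
    simp [trunc, this, Fin.snoc_last]
  | cast i =>
    have hv : ((i.castSucc : Fin (m+1)) : ℕ) = (i : ℕ) := rfl
    by_cases hi : (i : ℕ) < m - k
    · simp only [trunc, hv, Nat.succ_sub_succ, if_pos hi, Fin.snoc_castSucc, Fin.init]
    · simp only [trunc, hv, Nat.succ_sub_succ, if_neg hi, Fin.snoc_castSucc]


private lemma branchPts_zero (A : Finset (Leaf n)) : branchPts A 0 = A := by
  ext w
  simp only [branchPts, Finset.mem_image, Finset.mem_filter, Finset.mem_product]
  constructor
  · rintro ⟨⟨u, v⟩, ⟨⟨hu, hv⟩, h0⟩, rfl⟩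
    rw [trunc_zero]
    exact hu
  · intro hw
    exact ⟨(w, w), ⟨⟨hw, hw⟩, meetAge_self w⟩, trunc_zero w⟩

private lemma bcount_zero (A : Finset (Leaf n)) : bcount A 0 = A.card := by
  rw [bcount, branchPts_zero]

private lemma snoc_false_injective {m : ℕ} :
    Function.Injective (fun y : Leaf m => (Fin.snoc y false : Leaf (m+1))) := by
  intro a b h
  have := congrArg Fin.init h
  simpa [Fin.init_snoc] using this

private lemma branchPts_succ {m : ℕ} (A : Finset (Leaf (m+1))) {k : ℕ} (hk : 1 ≤ k) :
    branchPts A (k+1) =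
      (branchPts (A.image Fin.init) k).image (fun y => Fin.snoc y false) := by
  ext w
  simp only [branchPts, Finset.mem_image, Finset.mem_filter, Finset.mem_product]
  constructor
  · rintro ⟨⟨u, v⟩, ⟨⟨hu, hv⟩, hm⟩, rfl⟩
    obtain ⟨hne, hmeet⟩ := (meetAge_succ_iff hk).mp hm
    exact ⟨trunc k (Fin.init u),
      ⟨(Fin.init u, Fin.init v), ⟨⟨⟨u, hu, rfl⟩, ⟨v, hv, rfl⟩⟩, hmeet⟩, rfl⟩,
      (trunc_succ u).symm⟩
  · rintro ⟨y, ⟨⟨x₁, x₂⟩, ⟨⟨⟨u, hu, rfl⟩, ⟨v, hv, rfl⟩⟩, hmeet⟩, rfl⟩, rfl⟩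
    have hne : Fin.init u ≠ Fin.init v := by
      intro e
      rw [e, meetAge_self] at hmeet
      omega
    exact ⟨(u, v), ⟨⟨hu, hv⟩, (meetAge_succ_iff hk).mpr ⟨hne, hmeet⟩⟩, trunc_succ u⟩

private lemma bcount_succ {m : ℕ} (A : Finset (Leaf (m+1))) {k : ℕ} (hk : 1 ≤ k) :
    bcount A (k+1) = bcount (A.image Fin.init) k := by
  rw [bcount, branchPts_succ A hk, bcount,
    Finset.card_image_of_injective _ snoc_false_injective]

/-- The set of `x` in the projection of `A` both of whose children lie in `A`. -/
private def dset {m : ℕ} (A : Finset (Leaf (m+1))) : Finset (Leaf m) :=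
  (A.image Fin.init).filter (fun x => Fin.snoc x true ∈ A ∧ Fin.snoc x false ∈ A)

private lemma dset_subset {m : ℕ} (A : Finset (Leaf (m+1))) :
    dset A ⊆ A.image Fin.init := Finset.filter_subset _ _

private lemma branchPts_one {m : ℕ} (A : Finset (Leaf (m+1))) :
    branchPts A 1 = (dset A).image (fun y => Fin.snoc y false) := by
  ext w
  simp only [branchPts, dset, Finset.mem_image, Finset.mem_filter, Finset.mem_product]
  constructor
  · rintro ⟨⟨u, v⟩, ⟨⟨hu, hv⟩, hm⟩, rfl⟩
    dsimp only at hu hv hm ⊢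
    obtain ⟨hne, hinit⟩ := meetAge_one_iff.mp hm
    have hlast : u (Fin.last m) ≠ v (Fin.last m) := by
      intro he
      apply hne
      funext i
      induction i using Fin.lastCases with
      | last => exact he
      | cast i => exact congrFun hinit i
    have hu' : Fin.snoc (Fin.init u) (u (Fin.last m)) ∈ A := by
      rw [Fin.snoc_init_self]; exact hu
    have hv' : Fin.snoc (Fin.init u) (v (Fin.last m)) ∈ A := by
      rw [hinit, Fin.snoc_init_self]; exact hv
    have htr : trunc 1 u = Fin.snoc (Fin.init u) false := by
      have h0 := trunc_succ (k := 0) u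
      rwa [trunc_zero] at h0
    refine ⟨Fin.init u, ⟨⟨u, hu, rfl⟩, ?_, ?_⟩, htr.symm⟩
    · cases hul : u (Fin.last m)
      · cases hvl : v (Fin.last m)
        · rw [hul, hvl] at hlast; exact absurd rfl hlast
        · rw [hvl] at hv'; exact hv'
      · rw [hul] at hu'; exact hu'
    · cases hul : u (Fin.last m)
      · rw [hul] at hu'; exact hu'
      · cases hvl : v (Fin.last m)
        · rw [hvl] at hv'; exact hv'
        · rw [hul, hvl] at hlast; exact absurd rfl hlast
  · rintro ⟨x, ⟨hx, hxt, hxf⟩, rfl⟩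
    have hne : (Fin.snoc x false : Leaf (m+1)) ≠ Fin.snoc x true := by
      intro e
      have := congrFun e (Fin.last m)
      simp [Fin.snoc_last] at this
    have hinit : Fin.init (Fin.snoc x false : Leaf (m+1)) =
        Fin.init (Fin.snoc x true : Leaf (m+1)) := by
      rw [Fin.init_snoc, Fin.init_snoc]
    have htr : trunc 1 (Fin.snoc x false : Leaf (m+1)) = Fin.snoc x false := by
      have h0 := trunc_succ (k := 0) (Fin.snoc x false : Leaf (m+1))
      rwa [trunc_zero, Fin.init_snoc] at h0
    exact ⟨(Fin.snoc x false, Fin.snoc x true), ⟨⟨hxf, hxt⟩,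
      meetAge_one_iff.mpr ⟨hne, hinit⟩⟩, htr⟩

private lemma bcount_one {m : ℕ} (A : Finset (Leaf (m+1))) :
    bcount A 1 = (dset A).card := by
  rw [bcount, branchPts_one, Finset.card_image_of_injective _ snoc_false_injective]


private lemma snoc_last_eq {m : ℕ} (u : Leaf (m+1)) :
    Fin.snoc (Fin.init u) (u (Fin.last m)) = u := Fin.snoc_init_self u

private lemma init_fiber_card {m : ℕ} (A : Finset (Leaf (m+1))) {x : Leaf m}
    (hx : x ∈ A.image Fin.init) :
    (A.filter (fun u => Fin.init u = x)).card = if x ∈ dset A then 2 else 1 := by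
  by_cases hd : x ∈ dset A
  · rw [if_pos hd]
    obtain ⟨-, hxt, hxf⟩ := Finset.mem_filter.mp hd
    have : A.filter (fun u => Fin.init u = x) =
        {Fin.snoc x true, Fin.snoc x false} := by
      ext u
      simp only [Finset.mem_filter, Finset.mem_insert, Finset.mem_singleton]
      constructor
      · rintro ⟨hu, rfl⟩
        rcases Bool.dichotomy (u (Fin.last m)) with hl | hl
        · right; rw [← hl]; exact (snoc_last_eq u).symm
        · left; rw [← hl]; exact (snoc_last_eq u).symm
      · rintro (rfl | rfl)
        · exact ⟨hxt, Fin.init_snoc _ _⟩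
        · exact ⟨hxf, Fin.init_snoc _ _⟩
    rw [this]
    rw [Finset.card_insert_of_notMem, Finset.card_singleton]
    simp only [Finset.mem_singleton]
    intro e
    have := congrFun e (Fin.last m)
    simp [Fin.snoc_last] at this
  · rw [if_neg hd]
    obtain ⟨u, hu, rfl⟩ := Finset.mem_image.mp hx
    rw [Finset.card_eq_one]
    refine ⟨u, ?_⟩
    ext v
    simp only [Finset.mem_filter, Finset.mem_singleton]
    constructor
    · rintro ⟨hv, hvi⟩
      by_contra hvu
      have hl : v (Fin.last m) ≠ u (Fin.last m) := by
        intro he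
        apply hvu
        rw [← snoc_last_eq v, ← snoc_last_eq u, hvi, he]
      apply hd
      have hueq : Fin.snoc (Fin.init u) (u (Fin.last m)) = u := snoc_last_eq u
      have hveq : Fin.snoc (Fin.init u) (v (Fin.last m)) = v := by
        rw [← hvi]; exact snoc_last_eq v
      have key : ∀ b : Bool, Fin.snoc (Fin.init u) b ∈ A := by
        intro b
        by_cases hb : b = u (Fin.last m)
        · rw [hb, hueq]; exact hu
        · have hbv : b = v (Fin.last m) := by
            revert hb hl
            cases b <;> cases hu2 : u (Fin.last m) <;> cases hv2 : v (Fin.last m) <;> simp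
          rw [hbv, hveq]; exact hv
      exact Finset.mem_filter.mpr ⟨hx, key true, key false⟩
    · rintro rfl
      exact ⟨hu, rfl⟩

private lemma card_eq_image_add_dset {m : ℕ} (A : Finset (Leaf (m+1))) :
    A.card = (A.image Fin.init).card + (dset A).card := by
  rw [Finset.card_eq_sum_card_fiberwise
    (f := Fin.init) (t := A.image Fin.init) (fun u hu => Finset.mem_image_of_mem _ hu)]
  rw [Finset.sum_congr rfl (fun x hx => init_fiber_card A hx)]
  have : ∀ x ∈ A.image Fin.init, (if x ∈ dset A then 2 else 1)
      = 1 + (if x ∈ dset A then 1 else 0) := by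
    intro x hx
    split_ifs <;> rfl
  rw [Finset.sum_congr rfl this, Finset.sum_add_distrib, Finset.sum_const, smul_eq_mul,
    mul_one, ← Finset.card_filter]
  congr 1
  rw [Finset.filter_mem_eq_inter, Finset.inter_eq_right.mpr (dset_subset A)]

private lemma euler : ∀ {n : ℕ} (A : Finset (Leaf n)), A.Nonempty →
    A.card = 1 + ∑ k ∈ Finset.Icc 1 n, bcount A k
  | 0, A, hA => by
    rw [show Finset.Icc 1 0 = ∅ from Finset.Icc_eq_empty (by omega), Finset.sum_empty]
    have h1 : A.card ≤ 1 := by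
      have := Finset.card_le_univ A
      simpa using this
    have h2 : 0 < A.card := hA.card_pos
    omega
  | (m+1), A, hA => by
    have hB : (A.image Fin.init).Nonempty := hA.image _
    have h1 := card_eq_image_add_dset A
    have h2 := euler (A.image Fin.init) hB
    have h3 : ∑ k ∈ Finset.Icc 1 m, bcount (A.image Fin.init) k
        = ∑ k ∈ Finset.Icc 2 (m+1), bcount A k := by
      rw [show Finset.Icc 2 (m+1) = (Finset.Icc 1 m).map (addRightEmbedding 1) from by
        rw [Finset.map_add_right_Icc], Finset.sum_map]
      refine Finset.sum_congr rfl (fun k hk => ?_)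
      obtain ⟨hk1, -⟩ := Finset.mem_Icc.mp hk
      exact (bcount_succ A hk1).symm
    have h4 : Finset.Icc 1 (m+1) = insert 1 (Finset.Icc 2 (m+1)) := by
      ext x
      simp only [Finset.mem_Icc, Finset.mem_insert]
      omega
    rw [h4, Finset.sum_insert (by simp), bcount_one, h1, h2, h3]
    omega


/-- Reconstruction of a subset of `Leaf (m+1)` from its projection `B`, the set `Dset`
of doubled points and a choice function `g` on `B \\ Dset`. -/
private def recon {m : ℕ} (B Dset : Finset (Leaf m))
    (g : (x : Leaf m) → x ∈ B \ Dset → Bool) : Finset (Leaf (m+1)) :=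
  Dset.biUnion (fun x => {Fin.snoc x true, Fin.snoc x false}) ∪
    (B \ Dset).attach.image (fun x => Fin.snoc x.1 (g x.1 x.2))

private lemma mem_recon {m : ℕ} {B Dset : Finset (Leaf m)}
    {g : (x : Leaf m) → x ∈ B \ Dset → Bool} {u : Leaf (m+1)} :
    u ∈ recon B Dset g ↔
      (∃ x ∈ Dset, u = Fin.snoc x true ∨ u = Fin.snoc x false) ∨
        ∃ x, ∃ h : x ∈ B \ Dset, u = Fin.snoc x (g x h) := by
  simp only [recon, Finset.mem_union, Finset.mem_biUnion, Finset.mem_insert,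
    Finset.mem_singleton, Finset.mem_image, Finset.mem_attach, true_and,
    Subtype.exists]
  constructor
  · rintro (⟨x, hx, h⟩ | ⟨x, hx, h⟩)
    · exact Or.inl ⟨x, hx, h⟩
    · exact Or.inr ⟨x, hx, h.symm⟩
  · rintro (⟨x, hx, h⟩ | ⟨x, hx, h⟩)
    · exact Or.inl ⟨x, hx, h⟩
    · exact Or.inr ⟨x, hx, h.symm⟩

private lemma snoc_inj_parts {m : ℕ} {x y : Leaf m} {b c : Bool}
    (h : (Fin.snoc x b : Leaf (m+1)) = Fin.snoc y c) : x = y ∧ b = c := by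
  constructor
  · have := congrArg Fin.init h
    simpa [Fin.init_snoc] using this
  · have := congrFun h (Fin.last m)
    simpa [Fin.snoc_last] using this

private lemma image_recon {m : ℕ} {B Dset : Finset (Leaf m)} (hD : Dset ⊆ B)
    (g : (x : Leaf m) → x ∈ B \ Dset → Bool) :
    (recon B Dset g).image Fin.init = B := by
  ext x
  simp only [Finset.mem_image]
  constructor
  · rintro ⟨u, hu, rfl⟩
    rcases mem_recon.mp hu with ⟨y, hy, (rfl | rfl)⟩ | ⟨y, hy, rfl⟩
    · rw [Fin.init_snoc]; exact hD hy
    · rw [Fin.init_snoc]; exact hD hy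
    · rw [Fin.init_snoc]; exact (Finset.mem_sdiff.mp hy).1
  · intro hx
    by_cases hxd : x ∈ Dset
    · exact ⟨Fin.snoc x true, mem_recon.mpr (Or.inl ⟨x, hxd, Or.inl rfl⟩),
        Fin.init_snoc _ _⟩
    · have hxs : x ∈ B \ Dset := Finset.mem_sdiff.mpr ⟨hx, hxd⟩
      exact ⟨Fin.snoc x (g x hxs), mem_recon.mpr (Or.inr ⟨x, hxs, rfl⟩),
        Fin.init_snoc _ _⟩

private lemma dset_recon {m : ℕ} {B Dset : Finset (Leaf m)} (hD : Dset ⊆ B)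
    (g : (x : Leaf m) → x ∈ B \ Dset → Bool) :
    dset (recon B Dset g) = Dset := by
  ext x
  simp only [dset, Finset.mem_filter, image_recon hD g]
  constructor
  · rintro ⟨hxB, hxt, hxf⟩
    by_contra hxd
    have hxs : x ∈ B \ Dset := Finset.mem_sdiff.mpr ⟨hxB, hxd⟩
    have ht : g x hxs = true := by
      rcases mem_recon.mp hxt with ⟨y, hy, (h | h)⟩ | ⟨y, hy, h⟩
      · exact absurd ((snoc_inj_parts h).1 ▸ hy) hxd
      · exact absurd (snoc_inj_parts h).2 (by simp)
      · obtain ⟨rfl, hb⟩ := snoc_inj_parts h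
        rw [← hb]
    have hf : g x hxs = false := by
      rcases mem_recon.mp hxf with ⟨y, hy, (h | h)⟩ | ⟨y, hy, h⟩
      · exact absurd (snoc_inj_parts h).2 (by simp)
      · exact absurd ((snoc_inj_parts h).1 ▸ hy) hxd
      · obtain ⟨rfl, hb⟩ := snoc_inj_parts h
        rw [← hb]
    rw [ht] at hf
    exact Bool.noConfusion hf
  · intro hxd
    exact ⟨hD hxd, mem_recon.mpr (Or.inl ⟨x, hxd, Or.inl rfl⟩),
      mem_recon.mpr (Or.inl ⟨x, hxd, Or.inr rfl⟩)⟩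

private lemma fiber_inner_card {m : ℕ} (B Dset : Finset (Leaf m)) (hD : Dset ⊆ B) :
    (Finset.univ.filter (fun A : Finset (Leaf (m+1)) =>
        A.image Fin.init = B ∧ dset A = Dset)).card = 2 ^ (B \ Dset).card := by
  have hcard : ((B \ Dset).pi (fun _ => (Finset.univ : Finset Bool))).card
      = 2 ^ (B \ Dset).card := by
    rw [Finset.card_pi]
    simp [Finset.prod_const]
  rw [← hcard]
  refine Finset.card_bij'
    (i := fun A _ => fun x _ => if Fin.snoc x true ∈ A then true else false)
    (j := fun g _ => recon B Dset (fun x h => g x h)) ?_ ?_ ?_ ?_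
  · intro A hA
    exact Finset.mem_pi.mpr (fun _ _ => Finset.mem_univ _)
  · intro g hg
    simp only [Finset.mem_filter, Finset.mem_univ, true_and]
    exact ⟨image_recon hD _, dset_recon hD _⟩
  · -- left inverse : recon (from A) = A
    intro A hA
    obtain ⟨-, hB, hDs⟩ := Finset.mem_filter.mp hA
    ext u
    rw [mem_recon]
    constructor
    · rintro (⟨x, hx, (rfl | rfl)⟩ | ⟨x, hx, rfl⟩)
      · rw [← hDs] at hx
        exact (Finset.mem_filter.mp hx).2.1
      · rw [← hDs] at hx
        exact (Finset.mem_filter.mp hx).2.2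
      · rw [← hDs, ← hB] at hx
        obtain ⟨hxB, hxd⟩ := Finset.mem_sdiff.mp hx
        obtain ⟨w, hw, rfl⟩ := Finset.mem_image.mp hxB
        dsimp only
        split_ifs with ht
        · exact ht
        · rcases Bool.dichotomy (w (Fin.last m)) with hl | hl
          · rw [show Fin.snoc (Fin.init w) false = w from by rw [← hl]; exact snoc_last_eq w]
            exact hw
          · exact absurd (by rw [← hl]; rw [snoc_last_eq]; exact hw) ht
    · intro hu
      have hx : Fin.init u ∈ B := by
        rw [← hB]; exact Finset.mem_image_of_mem _ hu
      by_cases hxd : Fin.init u ∈ Dset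
      · refine Or.inl ⟨Fin.init u, hxd, ?_⟩
        rcases Bool.dichotomy (u (Fin.last m)) with hl | hl
        · exact Or.inr (by rw [← hl]; exact (snoc_last_eq u).symm)
        · exact Or.inl (by rw [← hl]; exact (snoc_last_eq u).symm)
      · have hxs : Fin.init u ∈ B \ Dset := Finset.mem_sdiff.mpr ⟨hx, hxd⟩
        refine Or.inr ⟨Fin.init u, hxs, ?_⟩
        dsimp only
        split_ifs with ht
        · rcases Bool.dichotomy (u (Fin.last m)) with hl | hl
          · exfalso
            apply hxd
            rw [← hDs]
            refine Finset.mem_filter.mpr ⟨?_, ht, ?_⟩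
            · rw [hB]; exact hx
            · rw [show Fin.snoc (Fin.init u) false = u from by rw [← hl]; exact snoc_last_eq u]
              exact hu
          · rw [← hl]; exact (snoc_last_eq u).symm
        · rcases Bool.dichotomy (u (Fin.last m)) with hl | hl
          · rw [← hl]; exact (snoc_last_eq u).symm
          · exact absurd (by rw [← hl]; rw [snoc_last_eq]; exact hu) ht
  · -- right inverse
    intro g hg
    funext x hx
    have hmem : ∀ b : Bool, (Fin.snoc x b ∈ recon B Dset (fun x h => g x h)) ↔ b = g x hx := by
      intro b
      rw [mem_recon]
      constructor
      · rintro (⟨y, hy, (h | h)⟩ | ⟨y, hy, h⟩)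
        · exact absurd ((snoc_inj_parts h).1 ▸ hy) (Finset.mem_sdiff.mp hx).2
        · exact absurd ((snoc_inj_parts h).1 ▸ hy) (Finset.mem_sdiff.mp hx).2
        · obtain ⟨rfl, hb⟩ := snoc_inj_parts h
          exact hb
      · rintro rfl
        exact Or.inr ⟨x, hx, rfl⟩
    split_ifs with ht
    · exact (hmem true).mp ht
    · rcases Bool.dichotomy (g x hx) with hl | hl
      · exact hl.symm
      · exact absurd ((hmem true).mpr hl.symm) ht


private lemma fiber_card {m : ℕ} (B : Finset (Leaf m)) (b1 : ℕ) :
    (Finset.univ.filter (fun A : Finset (Leaf (m+1)) =>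
        A.image Fin.init = B ∧ (dset A).card = b1)).card
      = B.card.choose b1 * 2 ^ (B.card - b1) := by
  set S := Finset.univ.filter (fun A : Finset (Leaf (m+1)) =>
    A.image Fin.init = B ∧ (dset A).card = b1) with hS
  have hmap : ∀ A ∈ S, dset A ∈ B.powersetCard b1 := by
    intro A hA
    obtain ⟨-, hB, hc⟩ := Finset.mem_filter.mp hA
    exact Finset.mem_powersetCard.mpr ⟨hB ▸ dset_subset A, hc⟩
  rw [Finset.card_eq_sum_card_fiberwise hmap]
  have hterm : ∀ Dset ∈ B.powersetCard b1,
      (S.filter (fun A => dset A = Dset)).card = 2 ^ (B.card - b1) := by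
    intro Dset hDset
    obtain ⟨hsub, hcardD⟩ := Finset.mem_powersetCard.mp hDset
    have : S.filter (fun A => dset A = Dset) =
        Finset.univ.filter (fun A : Finset (Leaf (m+1)) =>
          A.image Fin.init = B ∧ dset A = Dset) := by
      ext A
      simp only [hS, Finset.filter_filter, Finset.mem_filter, Finset.mem_univ, true_and]
      constructor
      · rintro ⟨⟨hB, -⟩, hD⟩
        exact ⟨hB, hD⟩
      · rintro ⟨hB, hD⟩
        exact ⟨⟨hB, hD ▸ hcardD⟩, hD⟩
    rw [this, fiber_inner_card B Dset hsub, Finset.card_sdiff_of_subset hsub, hcardD]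
  rw [Finset.sum_congr rfl hterm, Finset.sum_const, Finset.card_powersetCard,
    smul_eq_mul]

private lemma image_pattern {m : ℕ} (b : ℕ → ℕ) (A : Finset (Leaf (m+1)))
    (hA : A.Nonempty) (h : ∀ k ≤ m+1, bcount A k = b k) :
    ∀ k ≤ m, bcount (A.image Fin.init) k
      = (if k = 0 then b 0 - b 1 else b (k+1)) := by
  intro k hk
  rcases Nat.eq_zero_or_pos k with rfl | hk1
  · have h0 : A.card = b 0 := by rw [← bcount_zero]; exact h 0 (by omega)
    have h1 : (dset A).card = b 1 := by rw [← bcount_one]; exact h 1 (by omega)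
    have := card_eq_image_add_dset A
    rw [if_pos rfl, bcount_zero]
    omega
  · rw [if_neg (by omega), ← bcount_succ A hk1]
    exact h (k+1) (by omega)

set_option maxHeartbeats 2000000 in
private lemma aux_count (n : ℕ) : ∀ (b : ℕ → ℕ),
    (∃ A : Finset (Leaf n), A.Nonempty ∧ ∀ k ≤ n, bcount A k = b k) →
    (Finset.univ.filter (fun A : Finset (Leaf n) =>
        A.Nonempty ∧ ∀ k ≤ n, bcount A k = b k)).card
      = ∏ k ∈ Finset.Icc 1 n,
          Nat.choose (1 + ∑ j ∈ Finset.Icc (k + 1) n, b j) (b k) *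
            2 ^ ((1 + ∑ j ∈ Finset.Icc (k + 1) n, b j) - b k) := by
  induction n with
  | zero =>
    intro b hadm
    obtain ⟨A₀, hA₀, hp₀⟩ := hadm
    have hcard1 : ∀ C : Finset (Leaf 0), C.Nonempty → C.card = 1 := by
      intro C hC
      have h1 : C.card ≤ 1 := by simpa using Finset.card_le_univ C
      have h2 : 0 < C.card := hC.card_pos
      omega
    have hb0 : b 0 = 1 := by
      rw [← hp₀ 0 le_rfl, bcount_zero, hcard1 A₀ hA₀]
    rw [show Finset.Icc 1 0 = ∅ from Finset.Icc_eq_empty (by omega), Finset.prod_empty]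
    rw [Finset.card_eq_one]
    refine ⟨A₀, ?_⟩
    ext C
    simp only [Finset.mem_filter, Finset.mem_univ, true_and, Finset.mem_singleton]
    constructor
    · rintro ⟨hC, -⟩
      have huniv : ∀ C : Finset (Leaf 0), C.Nonempty → C = Finset.univ := by
        intro C hC
        apply Finset.eq_univ_of_card
        rw [hcard1 C hC]
        simp
      rw [huniv C hC, huniv A₀ hA₀]
    · rintro rfl
      exact ⟨hA₀, hp₀⟩
  | succ m ih =>
    intro b hadm
    obtain ⟨A₀, hA₀, hp₀⟩ := hadm
    set b' : ℕ → ℕ := fun k => if k = 0 then b 0 - b 1 else b (k+1) with hb'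
    have hB₀ : (A₀.image Fin.init).Nonempty := hA₀.image _
    have hpB₀ : ∀ k ≤ m, bcount (A₀.image Fin.init) k = b' k :=
      image_pattern b A₀ hA₀ hp₀
    have hb0card : A₀.card = b 0 := by rw [← bcount_zero]; exact hp₀ 0 (by omega)
    have hb1card : (dset A₀).card = b 1 := by rw [← bcount_one]; exact hp₀ 1 (by omega)
    have hsplit := card_eq_image_add_dset A₀
    have hb1le : b 1 ≤ b 0 := by omega
    have heulb : b 0 = 1 + ∑ k ∈ Finset.Icc 1 (m+1), b k := by
      rw [← hb0card, euler A₀ hA₀]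
      congr 1
      exact Finset.sum_congr rfl fun k hk => hp₀ k (Finset.mem_Icc.mp hk).2
    have hIccIns : Finset.Icc 1 (m+1) = insert 1 (Finset.Icc 2 (m+1)) := by
      ext x
      simp only [Finset.mem_Icc, Finset.mem_insert]
      omega
    have ha1 : b 0 - b 1 = 1 + ∑ j ∈ Finset.Icc 2 (m+1), b j := by
      rw [hIccIns, Finset.sum_insert (by simp)] at heulb
      omega
    have hmapT : ∀ A ∈ Finset.univ.filter (fun A : Finset (Leaf (m+1)) =>
        A.Nonempty ∧ ∀ k ≤ m+1, bcount A k = b k),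
        A.image Fin.init ∈ Finset.univ.filter (fun B : Finset (Leaf m) =>
          B.Nonempty ∧ ∀ k ≤ m, bcount B k = b' k) := by
      intro A hA
      obtain ⟨-, hne, hp⟩ := Finset.mem_filter.mp hA
      exact Finset.mem_filter.mpr ⟨Finset.mem_univ _,
        hne.image _, image_pattern b A hne hp⟩
    have hfib : ∀ B ∈ Finset.univ.filter (fun B : Finset (Leaf m) =>
        B.Nonempty ∧ ∀ k ≤ m, bcount B k = b' k),
        ((Finset.univ.filter (fun A : Finset (Leaf (m+1)) =>
          A.Nonempty ∧ ∀ k ≤ m+1, bcount A k = b k)).filter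
            (fun A => A.image Fin.init = B)).card
        = (b 0 - b 1).choose (b 1) * 2 ^ ((b 0 - b 1) - b 1) := by
      intro B hB
      obtain ⟨hBne, hBp⟩ := (Finset.mem_filter.mp hB).2
      have hBcard : B.card = b 0 - b 1 := by
        have h0 := hBp 0 (by omega)
        rw [bcount_zero] at h0
        simpa [hb'] using h0
      have heq : (Finset.univ.filter (fun A : Finset (Leaf (m+1)) =>
            A.Nonempty ∧ ∀ k ≤ m+1, bcount A k = b k)).filter
              (fun A => A.image Fin.init = B) =
          Finset.univ.filter (fun A : Finset (Leaf (m+1)) =>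
            A.image Fin.init = B ∧ (dset A).card = b 1) := by
        ext A
        simp only [Finset.filter_filter, Finset.mem_filter, Finset.mem_univ,
          true_and]
        constructor
        · rintro ⟨⟨hne, hp⟩, hi⟩
          refine ⟨hi, ?_⟩
          rw [← bcount_one]
          exact hp 1 (by omega)
        · rintro ⟨hi, hd⟩
          have hne : A.Nonempty := by
            rw [← Finset.image_nonempty (f := Fin.init)]
            rw [hi]
            exact hBne
          refine ⟨⟨hne, ?_⟩, hi⟩
          intro k hk
          have hcardA := card_eq_image_add_dset A
          rw [hi] at hcardA
          rcases k with _ | (_ | j)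
          · rw [bcount_zero]
            omega
          · rw [bcount_one, hd]
          · rw [bcount_succ A (by omega : 1 ≤ j + 1), hi]
            have := hBp (j+1) (by omega)
            rw [this]
            simp [hb']
      rw [heq, fiber_card B (b 1), hBcard]
    rw [Finset.card_eq_sum_card_fiberwise hmapT, Finset.sum_congr rfl hfib,
      Finset.sum_const, smul_eq_mul]
    have hw : ∃ A : Finset (Leaf m), A.Nonempty ∧ ∀ k ≤ m, bcount A k = b' k := by
      refine ⟨A₀.image Fin.init, hB₀, ?_⟩
      exact hpB₀
    have hT := ih b' hw
    have hprod : ∏ k ∈ Finset.Icc 1 m,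
        (Nat.choose (1 + ∑ j ∈ Finset.Icc (k + 1) m, b' j) (b' k) *
          2 ^ ((1 + ∑ j ∈ Finset.Icc (k + 1) m, b' j) - b' k))
        = ∏ k ∈ Finset.Icc 2 (m+1),
            Nat.choose (1 + ∑ j ∈ Finset.Icc (k + 1) (m+1), b j) (b k) *
              2 ^ ((1 + ∑ j ∈ Finset.Icc (k + 1) (m+1), b j) - b k) := by
      rw [show Finset.Icc 2 (m+1) = (Finset.Icc 1 m).map (addRightEmbedding 1) from by
        rw [Finset.map_add_right_Icc], Finset.prod_map]
      refine Finset.prod_congr rfl fun k hk => ?_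
      obtain ⟨hk1, hk2⟩ := Finset.mem_Icc.mp hk
      have hsum : ∑ j ∈ Finset.Icc (k + 1) m, b' j
          = ∑ j ∈ Finset.Icc (addRightEmbedding 1 k + 1) (m+1), b j := by
        rw [show Finset.Icc (addRightEmbedding 1 k + 1) (m+1)
            = (Finset.Icc (k+1) m).map (addRightEmbedding 1) from by
          rw [Finset.map_add_right_Icc]; rfl, Finset.sum_map]
        refine Finset.sum_congr rfl fun j hj => ?_
        obtain ⟨hj1, -⟩ := Finset.mem_Icc.mp hj
        simp only [hb', addRightEmbedding, Function.Embedding.coeFn_mk]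
        rw [if_neg (by omega)]
      have hbk : b' k = b (addRightEmbedding 1 k) := by
        simp only [hb', addRightEmbedding, Function.Embedding.coeFn_mk]
        rw [if_neg (by omega)]
      rw [hsum, hbk]
    rw [hT, hprod, hIccIns, Finset.prod_insert (by simp)]
    rw [show (1 + ∑ j ∈ Finset.Icc (1 + 1) (m+1), b j) = b 0 - b 1 from by
      rw [ha1]]
    ring

end Stmt5Aux





/-- Lemma 3.1: the number of subsets `A ⊆ 𝕃₀⁽ⁿ⁾` whose first order
branching pattern equals a given admissible pattern `b` is
`∏_{k=1}^n C(a_k, b_k) 2^{a_k - b_k}` with `a_k = 1 + ∑_{j=k+1}^n b_j`. -/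
theorem stmt5 (n : ℕ) (hn : 1 ≤ n) (b : ℕ → ℕ)
    (hadm : ∃ A : Finset (Leaf n), A.Nonempty ∧ ∀ k ≤ n, bcount A k = b k) :
    (Finset.univ.filter (fun A : Finset (Leaf n) =>
        A.Nonempty ∧ ∀ k ≤ n, bcount A k = b k)).card
      = ∏ k ∈ Finset.Icc 1 n,
          Nat.choose (1 + ∑ j ∈ Finset.Icc (k + 1) n, b j) (b k) *
            2 ^ ((1 + ∑ j ∈ Finset.Icc (k + 1) n, b j) - b k) := by
  exact aux_count n b hadm

end PWC
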